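/- (Feinstein's lemma.) For every θ ∈ ℝ and every 0 < ε < 1, the maximal size N(ε) of an ε-code satisfies N(ε) ≥ e^{θ}·(ε − P[i(X,Y) ≤ θ]), where P[i(X,Y) ≤ θ] = ∑_{(x,y) : i(x,y) ≤ θ} P_X(x)·W(y|x). -/

import Mathlib

open scoped BigOperators

/-- Feinstein's lemma: for a channel `W` from a countable `X` to a
countable `Y` with input distribution `P_X`, output distribution
`P_Y(y) = ∑_x P_X(x) W(y|x)` and information density `i(x,y) = log(W(y|x)/P_Y(y))`
(pairs with `W(y|x) = 0` counted as `i(x,y) ≤ θ`), for every `θ ∈ ℝ` and `0 < ε < 1`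
the maximal size `N(ε)` of an ε-code satisfies `N(ε) ≥ e^θ (ε - P[i(X,Y) ≤ θ])`;
the bound is witnessed by an actual ε-code of size `N`. -/
theorem feinstein_lemma {X Y : Type} [Countable X] [Countable Y]
    (W : X → Y → ℝ) (PX : X → ℝ)
    (hW0 : ∀ x y, 0 ≤ W x y) (hW1 : ∀ x, HasSum (W x) 1)
    (hPX0 : ∀ x, 0 ≤ PX x) (hPX1 : HasSum PX 1)
    (θ ε : ℝ) (hε0 : 0 < ε) (hε1 : ε < 1) :
    ∃ (N : ℕ) (cw : Fin N → X) (D : Fin N → Set Y),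
      (∀ i j : Fin N, i ≠ j → Disjoint (D i) (D j)) ∧
      (∀ i : Fin N, 1 - ε < ∑' y : (D i), W (cw i) y.val) ∧
      Real.exp θ *
          (ε - ∑' p : {p : X × Y //
              W p.1 p.2 = 0 ∨
                Real.log (W p.1 p.2 / ∑' x : X, PX x * W x p.2) ≤ θ},
            PX p.val.1 * W p.val.1 p.val.2) ≤ (N : ℝ) := by
  classical
  -- basic objects
  set f : X × Y → ℝ := fun p => PX p.1 * W p.1 p.2 with hfdef
  have hf0 : ∀ p, 0 ≤ f p := fun p => mul_nonneg (hPX0 _) (hW0 _ _)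
  have hWle1 : ∀ x y, W x y ≤ 1 := fun x y => le_hasSum (hW1 x) y fun j _ => hW0 x j
  have hrow : ∀ x, ∑' y, f (x, y) = PX x := by
    intro x
    simp only [hfdef]
    rw [tsum_mul_left, (hW1 x).tsum_eq, mul_one]
  have hfs : Summable f := by
    refine (summable_prod_of_nonneg hf0).mpr ⟨fun x => ?_, ?_⟩
    · exact ((hW1 x).summable.mul_left (PX x))
    · simp only [hrow]; exact hPX1.summable
  have hftot : ∑' p, f p = 1 := by
    rw [Summable.tsum_prod hfs]
    simp only [hrow, hPX1.tsum_eq]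
  -- output distribution
  set PY : Y → ℝ := fun y => ∑' x, PX x * W x y with hPYdef
  have hPY0 : ∀ y, 0 ≤ PY y := fun y => tsum_nonneg fun x => mul_nonneg (hPX0 x) (hW0 x y)
  have hPYs : Summable PY := by
    have := hfs.prod_symm.prod
    simpa [hfdef, Function.comp] using this
  -- the "good" sets
  set A : X → Set Y := fun x =>
    {y | ¬ (W x y = 0 ∨ Real.log (W x y / ∑' x' : X, PX x' * W x' y) ≤ θ)} with hAdef
  -- key pointwise bound on good pairs
  have hkey : ∀ x y, y ∈ A x → PY y ≤ Real.exp (-θ) * W x y := by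
    intro x y hy
    simp only [hAdef, Set.mem_setOf_eq, not_or, not_le] at hy
    obtain ⟨hWne, hlog⟩ := hy
    have hWpos : 0 < W x y := lt_of_le_of_ne (hW0 x y) (Ne.symm hWne)
    rcases eq_or_lt_of_le (hPY0 y) with h0 | hpos
    · rw [← h0]
      positivity
    · have hzpos : 0 < W x y / PY y := div_pos hWpos hpos
      have : Real.exp θ < W x y / PY y := by
        calc Real.exp θ < Real.exp (Real.log (W x y / PY y)) := Real.exp_lt_exp.mpr hlog
        _ = W x y / PY y := Real.exp_log hzpos
      have h2 : Real.exp θ * PY y < W x y := by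
        rw [lt_div_iff₀ hpos] at this; linarith [this]
      rw [Real.exp_neg]
      rw [inv_mul_eq_div, le_div_iff₀ (Real.exp_pos θ)]
      linarith [h2]
  -- subtype sums of W are at most 1
  have hsub1 : ∀ (x : X) (s : Set Y), ∑' y : s, W x y ≤ 1 := by
    intro x s
    rw [tsum_subtype]
    calc ∑' y, s.indicator (W x) y ≤ ∑' y, W x y :=
          Summable.tsum_le_tsum (fun y => Set.indicator_le_self' (fun y' _ => hW0 x y') y)
            ((hW1 x).summable.indicator s) (hW1 x).summable
    _ = 1 := (hW1 x).tsum_eq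
  -- codes
  set Good : ℕ → Prop := fun N => ∃ cw : Fin N → X, ∃ D : Fin N → Set Y,
    (∀ i j, i ≠ j → Disjoint (D i) (D j)) ∧ (∀ i, D i ⊆ A (cw i)) ∧
    (∀ i, 1 - ε < ∑' y : (D i), W (cw i) y.val) with hGooddef
  have hGood0 : Good 0 := ⟨Fin.elim0, Fin.elim0, fun i => i.elim0, fun i => i.elim0,
    fun i => i.elim0⟩
  have hPnn : (0:ℝ) ≤ ∑' p : {p : X × Y //
      W p.1 p.2 = 0 ∨ Real.log (W p.1 p.2 / ∑' x : X, PX x * W x p.2) ≤ θ},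
      PX p.val.1 * W p.val.1 p.val.2 :=
    tsum_nonneg fun p => mul_nonneg (hPX0 _) (hW0 _ _)
  by_cases hbdd : BddAbove {N | Good N}
  · -- maximal code
    set N := sSup {N | Good N} with hNdef
    have hNmem : Good N := Nat.sSup_mem ⟨0, hGood0⟩ hbdd
    obtain ⟨cw, D, hdisj, hsubA, hcov⟩ := hNmem
    refine ⟨N, cw, D, hdisj, hcov, ?_⟩
    set DU : Set Y := ⋃ i, D i with hDUdef
    -- maximality
    have hmax : ∀ x : X, ∑' y : ↥(A x \ DU), W x y ≤ 1 - ε := by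
      intro x
      by_contra hcon
      push_neg at hcon
      have hext : Good (N + 1) := by
        refine ⟨Fin.snoc cw x, Fin.snoc D (A x \ DU), ?_, ?_, ?_⟩
        · intro i j hij
          rcases Fin.eq_castSucc_or_eq_last i with ⟨i', rfl⟩ | rfl <;>
            rcases Fin.eq_castSucc_or_eq_last j with ⟨j', rfl⟩ | rfl
          · simp only [Fin.snoc_castSucc]
            exact hdisj i' j' (fun h => hij (by rw [h]))
          · simp only [Fin.snoc_castSucc, Fin.snoc_last]
            exact (disjoint_sdiff_self_left.mono_right (Set.subset_iUnion D i')).symm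
          · simp only [Fin.snoc_castSucc, Fin.snoc_last]
            exact disjoint_sdiff_self_left.mono_right (Set.subset_iUnion D j')
          · exact absurd rfl hij
        · intro i
          rcases Fin.eq_castSucc_or_eq_last i with ⟨i', rfl⟩ | rfl
          · simpa only [Fin.snoc_castSucc] using hsubA i'
          · simp only [Fin.snoc_last]
            exact Set.diff_subset
        · intro i
          rw [tsum_subtype]
          rcases Fin.eq_castSucc_or_eq_last i with ⟨i', rfl⟩ | rfl
          · simp only [Fin.snoc_castSucc]
            rw [← tsum_subtype]
            exact hcov i'
          · simp only [Fin.snoc_last]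
            rw [← tsum_subtype]
            exact hcon
      have : N + 1 ≤ N := le_csSup hbdd hext
      omega
    -- the counting argument
    set P := ∑' p : {p : X × Y //
        W p.1 p.2 = 0 ∨
          Real.log (W p.1 p.2 / ∑' x : X, PX x * W x p.2) ≤ θ},
        PX p.val.1 * W p.val.1 p.val.2 with hPdef
    set Bset : Set (X × Y) := {p | W p.1 p.2 = 0 ∨
        Real.log (W p.1 p.2 / ∑' x : X, PX x * W x p.2) ≤ θ} with hBdef
    have hQP : P + (∑' p : ↥(Bsetᶜ), f p) = 1 := by
      have h := Summable.tsum_subtype_add_tsum_subtype_compl hfs Bset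
      rw [hftot] at h
      exact h
    -- rewrite the complement sum fiberwise
    have hAx : ∀ x, (∑' y, (Bsetᶜ).indicator f (x, y)) = PX x * ∑' y : A x, W x y := by
      intro x
      have hpt : ∀ y, (Bsetᶜ).indicator f (x, y)
          = (A x).indicator (fun y' => PX x * W x y') y := by
        intro y
        by_cases h : y ∈ A x
        · rw [Set.indicator_of_mem h, Set.indicator_of_mem (by exact h)]
        · rw [Set.indicator_of_notMem h, Set.indicator_of_notMem (by exact h)]
      rw [tsum_congr hpt, ← tsum_subtype (A x) (fun y' => PX x * W x y'), tsum_mul_left]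
    have hQ : (∑' p : ↥(Bsetᶜ), f p) = ∑' x, PX x * ∑' y : A x, W x y := by
      rw [tsum_subtype, Summable.tsum_prod (hfs.indicator _)]
      exact tsum_congr hAx
    have hLS : Summable (fun x => PX x * ∑' y : A x, W x y) :=
      ((hfs.indicator _).prod).congr hAx
    -- split A x into the part inside DU and outside
    have hsplit : ∀ x, (∑' y : A x, W x y)
        ≤ (∑' y : ↥(A x ∩ DU), W x y) + (1 - ε) := by
      intro x
      have hdecomp : (∑' y : A x, W x y)
          = (∑' y : ↥(A x ∩ DU), W x y) + ∑' y : ↥(A x \ DU), W x y := by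
        rw [tsum_subtype, tsum_subtype, tsum_subtype,
          ← Summable.tsum_add ((hW1 x).summable.indicator _) ((hW1 x).summable.indicator _)]
        refine tsum_congr fun y => ?_
        by_cases h1 : y ∈ A x
        · by_cases h2 : y ∈ DU
          · rw [Set.indicator_of_mem h1, Set.indicator_of_mem (show y ∈ A x ∩ DU from ⟨h1, h2⟩),
              Set.indicator_of_notMem (fun h => h.2 h2)]
            ring
          · rw [Set.indicator_of_mem h1, Set.indicator_of_notMem (fun h => h2 h.2),
              Set.indicator_of_mem (show y ∈ A x \ DU from ⟨h1, h2⟩)]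
            ring
        · rw [Set.indicator_of_notMem h1, Set.indicator_of_notMem (fun h => h1 h.1),
            Set.indicator_of_notMem (fun h => h1 h.1)]
          ring
      rw [hdecomp]
      have := hmax x
      linarith
    have hC : ∀ x, (∑' y : ↥(A x ∩ DU), W x y) ≤ ∑' y : DU, W x y := by
      intro x
      rw [tsum_subtype, tsum_subtype]
      refine Summable.tsum_le_tsum (fun y => ?_)
        ((hW1 x).summable.indicator _) ((hW1 x).summable.indicator _)
      exact Set.indicator_le_indicator_of_subset Set.inter_subset_right (hW0 x) y
    have hWD1 : ∀ x, (∑' y : DU, W x y) ≤ 1 := fun x => hsub1 x DU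
    have hWD0 : ∀ x, 0 ≤ ∑' y : DU, W x y :=
      fun x => tsum_nonneg fun y => hW0 x y
    have hRS1 : Summable (fun x => PX x * ∑' y : DU, W x y) :=
      Summable.of_nonneg_of_le (fun x => mul_nonneg (hPX0 x) (hWD0 x))
        (fun x => mul_le_of_le_one_right (hPX0 x) (hWD1 x)) hPX1.summable
    have hRS2 : Summable (fun x => PX x * (1 - ε)) := hPX1.summable.mul_right _
    have hRS : Summable (fun x => PX x * ((∑' y : DU, W x y) + (1 - ε))) := by
      have : (fun x => PX x * ((∑' y : DU, W x y) + (1 - ε)))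
          = fun x => PX x * (∑' y : DU, W x y) + PX x * (1 - ε) := by
        funext x; ring
      rw [this]
      exact hRS1.add hRS2
    have hQle : (∑' p : ↥(Bsetᶜ), f p)
        ≤ (∑' x, PX x * ∑' y : DU, W x y) + (1 - ε) := by
      rw [hQ]
      calc (∑' x, PX x * ∑' y : A x, W x y)
          ≤ ∑' x, PX x * ((∑' y : DU, W x y) + (1 - ε)) := by
            refine Summable.tsum_le_tsum (fun x => ?_) hLS hRS
            refine mul_le_mul_of_nonneg_left ?_ (hPX0 x)
            exact le_trans (hsplit x) (by linarith [hC x])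
        _ = (∑' x, (PX x * (∑' y : DU, W x y) + PX x * (1 - ε))) := by
            refine tsum_congr fun x => ?_; ring
        _ = (∑' x, PX x * ∑' y : DU, W x y) + ∑' x, PX x * (1 - ε) :=
            Summable.tsum_add hRS1 hRS2
        _ = (∑' x, PX x * ∑' y : DU, W x y) + (1 - ε) := by
            rw [tsum_mul_right, hPX1.tsum_eq, one_mul]
    -- swap the double sum
    have hind : ∀ x y, DU.indicator (fun y' => PX x * W x y') y
        = PX x * DU.indicator (W x) y := fun x y => Set.indicator_const_mul DU (W x) (PX x) y
    have huncur : Summable (Function.uncurry fun x y =>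
        DU.indicator (fun y' => PX x * W x y') y) := by
      refine Summable.of_nonneg_of_le (fun p => ?_) (fun p => ?_) hfs
      · exact Set.indicator_nonneg (fun y' _ => mul_nonneg (hPX0 _) (hW0 _ _)) _
      · exact Set.indicator_le_self' (fun y' _ => mul_nonneg (hPX0 _) (hW0 _ _)) _
    have hswap : (∑' x, PX x * ∑' y : DU, W x y) = ∑' y : DU, PY y := by
      have h1 : ∀ x, PX x * (∑' y : DU, W x y)
          = ∑' y, DU.indicator (fun y' => PX x * W x y') y := by
        intro x
        rw [tsum_subtype, ← tsum_mul_left]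
        exact tsum_congr fun y => (hind x y).symm
      have h2 : ∀ y, (∑' x, DU.indicator (fun y' => PX x * W x y') y)
          = DU.indicator PY y := by
        intro y
        by_cases h : y ∈ DU
        · rw [Set.indicator_of_mem h]
          exact tsum_congr fun x => Set.indicator_of_mem h _
        · rw [Set.indicator_of_notMem h]
          have : ∀ x, DU.indicator (fun y' => PX x * W x y') y = 0 :=
            fun x => Set.indicator_of_notMem h _
          rw [tsum_congr this, tsum_zero]
      calc (∑' x, PX x * ∑' y : DU, W x y)
          = ∑' x, ∑' y, DU.indicator (fun y' => PX x * W x y') y := tsum_congr h1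
        _ = ∑' y, ∑' x, DU.indicator (fun y' => PX x * W x y') y := (Summable.tsum_comm huncur).symm
        _ = ∑' y, DU.indicator PY y := tsum_congr h2
        _ = ∑' y : DU, PY y := (tsum_subtype DU PY).symm
    -- bound the output mass of the decoding region
    have hDUind : ∀ y, DU.indicator PY y = ∑ i : Fin N, (D i).indicator PY y := by
      intro y
      by_cases h : y ∈ DU
      · obtain ⟨i, hi⟩ := Set.mem_iUnion.mp h
        rw [Set.indicator_of_mem h]
        rw [Finset.sum_eq_single i]
        · rw [Set.indicator_of_mem hi]
        · intro j _ hj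
          exact Set.indicator_of_notMem
            (fun hyj => Set.disjoint_left.mp (hdisj j i hj) hyj hi) _
        · intro h'; exact absurd (Finset.mem_univ i) h'
      · rw [Set.indicator_of_notMem h]
        exact (Finset.sum_eq_zero fun i _ => Set.indicator_of_notMem
          (fun hyi => h (Set.mem_iUnion.mpr ⟨i, hyi⟩)) _).symm
    have hDi : ∀ i : Fin N, (∑' y : (D i), PY y) ≤ Real.exp (-θ) := by
      intro i
      calc (∑' y : (D i), PY y)
          ≤ ∑' y : (D i), Real.exp (-θ) * W (cw i) y :=
            Summable.tsum_le_tsum (fun y => hkey (cw i) y (hsubA i y.2))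
              (hPYs.subtype _) (((hW1 (cw i)).summable.mul_left _).subtype _)
        _ = Real.exp (-θ) * ∑' y : (D i), W (cw i) y := tsum_mul_left
        _ ≤ Real.exp (-θ) * 1 :=
            mul_le_mul_of_nonneg_left (hsub1 _ _) (Real.exp_pos _).le
        _ = Real.exp (-θ) := mul_one _
    have hT : (∑' y : DU, PY y) ≤ N * Real.exp (-θ) := by
      rw [tsum_subtype]
      calc (∑' y, DU.indicator PY y)
          = ∑' y, ∑ i : Fin N, (D i).indicator PY y := tsum_congr hDUind
        _ = ∑ i : Fin N, ∑' y, (D i).indicator PY y :=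
            Summable.tsum_finsetSum fun i _ => hPYs.indicator _
        _ = ∑ i : Fin N, ∑' y : (D i), PY y := by
            refine Finset.sum_congr rfl fun i _ => (tsum_subtype _ _).symm
        _ ≤ ∑ i : Fin N, Real.exp (-θ) :=
            Finset.sum_le_sum fun i _ => hDi i
        _ = N * Real.exp (-θ) := by
            rw [Finset.sum_const, Finset.card_univ, Fintype.card_fin, nsmul_eq_mul]
    -- put everything together
    have hfinal : ε - P ≤ N * Real.exp (-θ) := by
      have h1 : (∑' p : ↥(Bsetᶜ), f p) ≤ N * Real.exp (-θ) + (1 - ε) := by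
        have := hQle
        rw [hswap] at this
        linarith [hT]
      linarith [hQP, h1]
    calc Real.exp θ * (ε - P)
        ≤ Real.exp θ * ((N : ℝ) * Real.exp (-θ)) :=
          mul_le_mul_of_nonneg_left hfinal (Real.exp_pos θ).le
      _ = (N : ℝ) := by
          rw [Real.exp_neg]
          field_simp
  · -- unbounded: arbitrarily large codes exist
    obtain ⟨M, hM, hMgt⟩ := (not_bddAbove_iff.mp hbdd) ⌈Real.exp θ * ε⌉₊
    obtain ⟨cw, D, hdisj, _, hcov⟩ := hM
    set N₀ := ⌈Real.exp θ * ε⌉₊ with hN₀def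
    have hle : N₀ ≤ M := le_of_lt hMgt
    refine ⟨N₀, cw ∘ Fin.castLE hle, D ∘ Fin.castLE hle, ?_, ?_, ?_⟩
    · intro i j hij
      exact hdisj _ _ (fun h => hij (Fin.castLE_injective hle h))
    · intro i; exact hcov _
    · calc Real.exp θ * (ε - _) ≤ Real.exp θ * ε := by
            apply mul_le_mul_of_nonneg_left _ (Real.exp_pos θ).le
            linarith [hPnn]
      _ ≤ N₀ := Nat.le_ceil _
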